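/- Let N be a positive integer and θ ∈ ℝ. Let R_N be the N×N parity matrix with entries (R_N)_{n,n'} = 1 if (n + n') ≡ 0 (mod N) and 0 otherwise, and let R̃ = U_θ ⊗ R_N, where U_θ = [[cosθ, sinθ],[sinθ, −cosθ]]. Then R̃ is a Hermitian unitary and R̃·U_psw(θ)·R̃ = U_psw(θ)†. Consequently, if λ is an eigenvalue of U_psw(θ) with eigenvector v, then conj(λ) is an eigenvalue of U_psw(θ) with eigenvector R̃·v. -/
import Mathlib


open Complex Matrix

/-- `ω = exp(2πi/N)`. -/
noncomputable def omegaN (N : ℕ) : ℂ := Complex.exp (2 * Real.pi * Complex.I / N)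

/-- The phase-space quantum walk operator `U_psw(θ)`, a `2N × 2N` matrix indexed by
(coin, walker) pairs, with block form `[[cosθ·T, sinθ·T],[sinθ·T̃, −cosθ·T̃]]`,
where `T` is the cyclic shift (`T|n⟩ = |n+1⟩`) and `T̃` the diagonal matrix with
`T̃|n⟩ = ω^n|n⟩`. -/
noncomputable def Upsw (N : ℕ) (θ : ℝ) :
    Matrix (Fin 2 × ZMod N) (Fin 2 × ZMod N) ℂ := fun p q =>
  if p.1 = 0 then
    (if q.1 = 0 then (Real.cos θ : ℂ) else (Real.sin θ : ℂ)) *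
      (if p.2 = q.2 + 1 then 1 else 0)
  else
    (if q.1 = 0 then (Real.sin θ : ℂ) else (-Real.cos θ : ℂ)) *
      (if p.2 = q.2 then omegaN N ^ (q.2.val) else 0)

/-- The coin operator `U_θ = [[cosθ, sinθ],[sinθ, −cosθ]]`. -/
noncomputable def coinU (θ : ℝ) : Matrix (Fin 2) (Fin 2) ℂ :=
  !![(Real.cos θ : ℂ), (Real.sin θ : ℂ); (Real.sin θ : ℂ), (-Real.cos θ : ℂ)]

/-- `R̃ = U_θ ⊗ R_N`, where `R_N` is the parity matrix
`(R_N)_{n,n'} = 1` iff `n + n' ≡ 0 (mod N)`. -/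
noncomputable def Rtilde (N : ℕ) (θ : ℝ) :
    Matrix (Fin 2 × ZMod N) (Fin 2 × ZMod N) ℂ := fun p q =>
  coinU θ p.1 q.1 * (if p.2 + q.2 = 0 then 1 else 0)

lemma omegaN_pow_N (N : ℕ) [NeZero N] : omegaN N ^ N = 1 := by
  rw [omegaN, ← Complex.exp_nat_mul]
  have hN : (N : ℂ) ≠ 0 := Nat.cast_ne_zero.mpr (NeZero.ne N)
  rw [mul_div_cancel₀ _ hN, Complex.exp_two_pi_mul_I]

lemma conj_omegaN (N : ℕ) : (starRingEnd ℂ) (omegaN N) = (omegaN N)⁻¹ := by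
  rw [omegaN, ← Complex.exp_conj, ← Complex.exp_neg]
  congr 1
  simp [map_div₀, Complex.conj_I, map_ofNat]
  ring

lemma omegaN_ne_zero (N : ℕ) : omegaN N ≠ 0 := Complex.exp_ne_zero _

lemma omegaN_neg_val (N : ℕ) [NeZero N] (m : ZMod N) :
    omegaN N ^ (-m).val * omegaN N ^ m.val = 1 := by
  rw [← pow_add]
  have h : ((-m).val + m.val) % N = 0 := by
    rw [← ZMod.val_add, neg_add_cancel, ZMod.val_zero]
  obtain ⟨k, hk⟩ := Nat.dvd_of_mod_eq_zero h
  rw [hk, pow_mul, omegaN_pow_N, one_pow]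

lemma conj_omegaN_pow (N : ℕ) [NeZero N] (m : ZMod N) :
    (starRingEnd ℂ) (omegaN N ^ m.val) = omegaN N ^ (-m).val := by
  rw [map_pow, conj_omegaN, inv_pow]
  field_simp
  exact (eq_one_div_of_mul_eq_one_left (mul_comm (omegaN N ^ (-m).val) _ ▸ omegaN_neg_val N m)).symm

lemma cossin (θ : ℝ) : (Real.cos θ : ℂ) * Real.cos θ + Real.sin θ * Real.sin θ = 1 := by
  norm_cast
  nlinarith [Real.cos_sq_add_sin_sq θ]

lemma coinU_symm (θ : ℝ) (a b : Fin 2) : coinU θ a b = coinU θ b a := by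
  fin_cases a <;> fin_cases b <;> simp [coinU]

lemma coinU_real (θ : ℝ) (a b : Fin 2) : (starRingEnd ℂ) (coinU θ a b) = coinU θ a b := by
  fin_cases a <;> fin_cases b <;> simp [coinU, -Complex.ofReal_cos, -Complex.ofReal_sin]

lemma coinU_sq (θ : ℝ) (a b : Fin 2) :
    ∑ c : Fin 2, coinU θ a c * coinU θ c b = if a = b then 1 else 0 := by
  fin_cases a <;> fin_cases b <;>
    simp [coinU, Fin.sum_univ_two, -Complex.ofReal_cos, -Complex.ofReal_sin] <;>
    (try ring_nf) <;> norm_cast <;> nlinarith [Real.cos_sq_add_sin_sq θ]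

lemma zmod_cond1 {N : ℕ} (a m : ZMod N) : a + m = 0 ↔ m = -a := by
  constructor
  · intro h; exact (neg_eq_of_add_eq_zero_right h).symm
  · intro h; subst h; ring

lemma zmod_cond2 {N : ℕ} (a m : ZMod N) : m + a = 0 ↔ m = -a := by
  rw [add_comm]; exact zmod_cond1 a m

lemma Rtilde_herm (N : ℕ) (θ : ℝ) : (Rtilde N θ)ᴴ = Rtilde N θ := by
  ext p q
  simp only [Matrix.conjTranspose_apply, Rtilde, star_mul']
  rw [add_comm q.2 p.2]
  simp [coinU_symm θ q.1 p.1, coinU_real, apply_ite (star : ℂ → ℂ)]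

lemma sum_pick {N : ℕ} [NeZero N] (a : ZMod N) (F : ZMod N → ℂ)
    (h : ∀ m, m ≠ a → F m = 0) : ∑ m, F m = F a :=
  Finset.sum_eq_single_of_mem _ (Finset.mem_univ _) (fun b _ hb => h b hb)

lemma Rtilde_sq (N : ℕ) [NeZero N] (θ : ℝ) : Rtilde N θ * Rtilde N θ = 1 := by
  ext p q
  rw [Matrix.mul_apply, Fintype.sum_prod_type]
  have h1 : ∀ c : Fin 2, (∑ m : ZMod N, Rtilde N θ p (c, m) * Rtilde N θ (c, m) q)
      = Rtilde N θ p (c, -p.2) * Rtilde N θ (c, -p.2) q := by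
    intro c
    apply sum_pick
    intro m hm
    have hc : ¬(p.2 + m = 0) := fun hc => hm (neg_eq_of_add_eq_zero_right hc).symm
    simp [Rtilde, hc]
  simp_rw [h1]
  by_cases h2 : p.2 = q.2
  · have : -p.2 + q.2 = 0 := by rw [h2]; ring
    simp only [Rtilde, add_neg_cancel, this, if_true, mul_one]
    rw [coinU_sq, Matrix.one_apply]
    simp [Prod.ext_iff, h2]
  · have : ¬(-p.2 + q.2 = 0) := fun hc => h2 (by have := neg_eq_of_add_eq_zero_left hc; simp_all)
    simp [Rtilde, this, Matrix.one_apply, Prod.ext_iff, h2]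

lemma Upsw_eq (N : ℕ) (θ : ℝ) (c c' : Fin 2) (m m' : ZMod N) :
    Upsw N θ (c, m) (c', m') = coinU θ c c' *
      (if c = 0 then (if m = m' + 1 then 1 else 0)
       else (if m = m' then omegaN N ^ m'.val else 0)) := by
  fin_cases c <;> fin_cases c' <;> simp [Upsw, coinU]

lemma coinU00 (θ : ℝ) : coinU θ 0 0 = (Real.cos θ : ℂ) := rfl

lemma coinU01 (θ : ℝ) : coinU θ 0 1 = (Real.sin θ : ℂ) := rfl

lemma coinU10 (θ : ℝ) : coinU θ 1 0 = (Real.sin θ : ℂ) := rfl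

lemma coinU11 (θ : ℝ) : coinU θ 1 1 = (-Real.cos θ : ℂ) := rfl

lemma coin_collapse (θ : ℝ) (p1 q1 : Fin 2) (D : Fin 2 → ℂ) :
    ∑ c : Fin 2, ∑ c' : Fin 2, coinU θ p1 c * (coinU θ c c' * D c) * coinU θ c' q1
      = coinU θ p1 q1 * D q1 := by
  have h := cossin θ
  fin_cases p1 <;> fin_cases q1 <;>
    simp only [Fin.sum_univ_two, Fin.zero_eta, Fin.mk_one, coinU00, coinU01, coinU10, coinU11]
  · linear_combination ((Real.cos θ : ℂ) * D 0) * h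
  · linear_combination ((Real.sin θ : ℂ) * D 1) * h
  · linear_combination ((Real.sin θ : ℂ) * D 0) * h
  · linear_combination (-(Real.cos θ : ℂ) * D 1) * h

lemma RU_entry (N : ℕ) [NeZero N] (θ : ℝ) (p s : Fin 2 × ZMod N) :
    (Rtilde N θ * Upsw N θ) p s
      = ∑ c : Fin 2, coinU θ p.1 c * Upsw N θ (c, -p.2) s := by
  rw [Matrix.mul_apply, Fintype.sum_prod_type]
  refine Finset.sum_congr rfl fun c _ => ?_
  have h1 : (∑ m : ZMod N, Rtilde N θ p (c, m) * Upsw N θ (c, m) s)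
      = Rtilde N θ p (c, -p.2) * Upsw N θ (c, -p.2) s := by
    apply sum_pick
    intro m hm
    have hc : ¬(p.2 + m = 0) := fun hc => hm (neg_eq_of_add_eq_zero_right hc).symm
    simp [Rtilde, hc]
  rw [h1]
  simp [Rtilde]

lemma RUR_entry (N : ℕ) [NeZero N] (θ : ℝ) (p q : Fin 2 × ZMod N) :
    (Rtilde N θ * Upsw N θ * Rtilde N θ) p q
      = coinU θ p.1 q.1 *
          (if q.1 = 0 then (if -p.2 = -q.2 + 1 then 1 else 0)
           else (if -p.2 = -q.2 then omegaN N ^ (-q.2).val else 0)) := by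
  rw [Matrix.mul_apply, Fintype.sum_prod_type]
  have h1 : ∀ c' : Fin 2,
      (∑ m : ZMod N, (Rtilde N θ * Upsw N θ) p (c', m) * Rtilde N θ (c', m) q)
        = (Rtilde N θ * Upsw N θ) p (c', -q.2) * Rtilde N θ (c', -q.2) q := by
    intro c'
    apply sum_pick
    intro m hm
    have hc : ¬(m + q.2 = 0) := fun hc => hm (eq_neg_of_add_eq_zero_left hc)
    simp [Rtilde, hc]
  simp_rw [h1, RU_entry]
  have h2 : ∀ c', Rtilde N θ (c', -q.2) q = coinU θ c' q.1 := by
    intro c'; simp [Rtilde]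
  simp_rw [h2, Finset.sum_mul, Upsw_eq]
  rw [Finset.sum_comm]
  exact coin_collapse θ p.1 q.1 _

lemma coinU_star (θ : ℝ) (a b : Fin 2) : star (coinU θ a b) = coinU θ a b :=
  coinU_real θ a b

lemma RUR_eq (N : ℕ) [NeZero N] (θ : ℝ) :
    Rtilde N θ * Upsw N θ * Rtilde N θ = (Upsw N θ)ᴴ := by
  ext p q
  obtain ⟨p1, p2⟩ := p; obtain ⟨q1, q2⟩ := q
  rw [RUR_entry, Matrix.conjTranspose_apply, Upsw_eq, star_mul', coinU_star,
    coinU_symm θ q1 p1]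
  dsimp only
  congr 1
  by_cases hq : q1 = 0
  · subst hq
    have hcond : ((-p2 : ZMod N) = -q2 + 1) ↔ (q2 = p2 + 1) :=
      ⟨fun h => by linear_combination h, fun h => by linear_combination h⟩
    simp [hcond, apply_ite (star : ℂ → ℂ)]
  · simp only [hq, if_false]
    by_cases h2 : q2 = p2
    · subst h2
      simp only [if_true, eq_self_iff_true, neg_inj]
      rw [Complex.star_def, conj_omegaN_pow]
    · have h3 : ¬((-p2 : ZMod N) = -q2) := fun h => h2 (by linear_combination h)
      simp [h2, h3]

lemma conj_omega_mul (N : ℕ) [NeZero N] (m : ZMod N) :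
    star (omegaN N ^ m.val) * omegaN N ^ m.val = 1 := by
  rw [Complex.star_def, conj_omegaN_pow]
  exact omegaN_neg_val N m

lemma UhU (N : ℕ) [NeZero N] (θ : ℝ) : (Upsw N θ)ᴴ * Upsw N θ = 1 := by
  ext p q
  obtain ⟨p1, p2⟩ := p; obtain ⟨q1, q2⟩ := q
  rw [Matrix.mul_apply, Fintype.sum_prod_type, Fin.sum_univ_two]
  simp only [Matrix.conjTranspose_apply, Upsw_eq, if_true, eq_self_iff_true,
    Fin.one_eq_zero_iff, OfNat.ofNat_ne_one, if_false]
  have h0 : (∑ m : ZMod N,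
      star (coinU θ 0 p1 * if m = p2 + 1 then (1:ℂ) else 0) *
        (coinU θ 0 q1 * if m = q2 + 1 then (1:ℂ) else 0))
      = star (coinU θ 0 p1) * coinU θ 0 q1 * (if p2 = q2 then 1 else 0) := by
    rw [sum_pick (p2 + 1) _ (fun m hm => by simp [hm])]
    by_cases h : p2 = q2 <;> simp [h]
  have h1 : (∑ m : ZMod N,
      star (coinU θ 1 p1 * if m = p2 then omegaN N ^ p2.val else 0) *
        (coinU θ 1 q1 * if m = q2 then omegaN N ^ q2.val else 0))
      = star (coinU θ 1 p1) * coinU θ 1 q1 * (if p2 = q2 then 1 else 0) := by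
    rw [sum_pick p2 _ (fun m hm => by simp [hm])]
    by_cases h : p2 = q2
    · subst h
      simp only [if_pos rfl, eq_self_iff_true, if_true]
      rw [star_mul']
      have hω := conj_omega_mul N p2
      linear_combination (star (coinU θ 1 p1) * coinU θ 1 q1) * hω
    · simp [h]
  rw [h0, h1, coinU_star, coinU_star, coinU_symm θ 0 p1, coinU_symm θ 1 p1]
  by_cases h : p2 = q2
  · subst h
    simp only [if_pos rfl, eq_self_iff_true, if_true, mul_one]
    have hs := coinU_sq θ p1 q1
    rw [Fin.sum_univ_two] at hs
    rw [hs, Matrix.one_apply]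
    simp [Prod.ext_iff]
  · simp [h, Matrix.one_apply, Prod.ext_iff]

open scoped ComplexOrder in

lemma dp_star_self_ne {ι : Type*} [Fintype ι] (v : ι → ℂ) (h : v ≠ 0) :
    star v ⬝ᵥ v ≠ 0 := fun hz => h (dotProduct_star_self_eq_zero.mp hz)

/-- `R̃` is a Hermitian unitary satisfying `R̃·U_psw(θ)·R̃ = U_psw(θ)†`,
and consequently if `U_psw(θ)·v = λ·v` with `v ≠ 0`, then `R̃·v` is a (nonzero)
eigenvector of `U_psw(θ)` with eigenvalue `conj(λ)`. -/
theorem psw_chiral_symmetry (N : ℕ) [NeZero N] (θ : ℝ) :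
    (Rtilde N θ)ᴴ = Rtilde N θ ∧
    Rtilde N θ ∈ Matrix.unitaryGroup (Fin 2 × ZMod N) ℂ ∧
    Rtilde N θ * Upsw N θ * Rtilde N θ = (Upsw N θ)ᴴ ∧
    (∀ (lam : ℂ) (v : Fin 2 × ZMod N → ℂ), v ≠ 0 →
      (Upsw N θ).mulVec v = lam • v →
      (Rtilde N θ).mulVec v ≠ 0 ∧
        (Upsw N θ).mulVec ((Rtilde N θ).mulVec v)
          = (starRingEnd ℂ) lam • (Rtilde N θ).mulVec v) := by
  set R := Rtilde N θ with hRdef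
  set U := Upsw N θ with hUdef
  have hherm : Rᴴ = R := Rtilde_herm N θ
  have hR2 : R * R = 1 := Rtilde_sq N θ
  have hRUR : R * U * R = Uᴴ := RUR_eq N θ
  have hUhU : Uᴴ * U = 1 := UhU N θ
  refine ⟨hherm, ?_, hRUR, ?_⟩
  · rw [Matrix.mem_unitaryGroup_iff, Matrix.star_eq_conjTranspose, hherm, hR2]
  intro lam v hv0 hv
  have hRv : R.mulVec (R.mulVec v) = v := by
    rw [Matrix.mulVec_mulVec, hR2, Matrix.one_mulVec]
  have hRvne : R.mulVec v ≠ 0 := fun h => hv0 (by rw [← hRv, h, Matrix.mulVec_zero])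
  -- |lam| = 1
  have hs : star v ⬝ᵥ v ≠ 0 := by
    exact dp_star_self_ne v hv0
  have hnorm : (starRingEnd ℂ) lam * lam = 1 := by
    have h1 : star (U.mulVec v) ⬝ᵥ U.mulVec v = star v ⬝ᵥ v := by
      rw [Matrix.star_mulVec, ← Matrix.dotProduct_mulVec, Matrix.mulVec_mulVec, hUhU,
        Matrix.one_mulVec]
    rw [hv] at h1
    have h2 : star (lam • v) ⬝ᵥ (lam • v) = ((starRingEnd ℂ) lam * lam) * (star v ⬝ᵥ v) := by
      rw [star_smul, smul_dotProduct, dotProduct_smul]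
      simp [Complex.star_def, mul_assoc]
    rw [h2] at h1
    have := sub_eq_zero.mpr h1
    rw [← sub_one_mul] at this
    rcases mul_eq_zero.mp this with h | h
    · exact sub_eq_zero.mp h
    · exact absurd h hs
  -- Uᴴ v = conj lam • v
  have hUhv : Uᴴ.mulVec v = (starRingEnd ℂ) lam • v := by
    have h3 : lam • Uᴴ.mulVec v = v := by
      rw [← Matrix.mulVec_smul, ← hv, Matrix.mulVec_mulVec, hUhU, Matrix.one_mulVec]
    calc Uᴴ.mulVec v = ((starRingEnd ℂ) lam * lam) • Uᴴ.mulVec v := by rw [hnorm, one_smul]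
      _ = (starRingEnd ℂ) lam • (lam • Uᴴ.mulVec v) := by rw [smul_smul]
      _ = (starRingEnd ℂ) lam • v := by rw [h3]
  have hUR : U * R = R * Uᴴ := by
    have h4 : R * U = Uᴴ * R := by
      calc R * U = R * U * (R * R) := by rw [hR2, mul_one]
        _ = (R * U * R) * R := by noncomm_ring
        _ = Uᴴ * R := by rw [hRUR]
    calc U * R = (R * R) * U * R := by rw [hR2, one_mul]
      _ = R * (R * U) * R := by noncomm_ring
      _ = R * (Uᴴ * R) * R := by rw [h4]
      _ = R * Uᴴ * (R * R) := by noncomm_ring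
      _ = R * Uᴴ := by rw [hR2, mul_one]
  refine ⟨hRvne, ?_⟩
  rw [Matrix.mulVec_mulVec, hUR, ← Matrix.mulVec_mulVec, hUhv, Matrix.mulVec_smul]
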